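/- Let G be a divisible abelian group with finite n-torsion for each n, and let f : G → H be a surjective homomorphism of divisible abelian groups whose kernel K is divisible. Then the induced map f̂ : Ĝ → Ĥ between inverse limits along multiplication maps restricts to a surjection ker ρ_G → ker ρ_H of the kernels of the first projections; that is, every coherent torsion-compatible sequence in H lifts to one in G. -/

import Mathlib

/-- The inverse limit `Ĝ = lim← (G, [m])`: coherent families `(g_n)_{n : ℕ+}`
with `m • g_{n*m} = g_n`, as a subgroup of the product. -/
def Coherent (G : Type*) [AddCommGroup G] : AddSubgroup (ℕ+ → G) where
  carrier := {g | ∀ n m : ℕ+, (m : ℕ) • g (n * m) = g n}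
  zero_mem' := by intro n m; simp
  add_mem' := by
    intro a b ha hb n m
    simp only [Pi.add_apply, smul_add, ha n m, hb n m]
  neg_mem' := by
    intro a ha n m
    simp only [Pi.neg_apply, smul_neg, ha n m]



/-- `ℕ+` ordered by divisibility. -/
def DvdPNat : Type := ℕ+

namespace DvdPNat

def mk : ℕ+ → DvdPNat := id
def val : DvdPNat → ℕ+ := id

@[simp] theorem val_mk (n : ℕ+) : (mk n).val = n := rfl

instance : Preorder DvdPNat where
  le a b := (a.val : ℕ) ∣ (b.val : ℕ)
  le_refl a := dvd_refl _
  le_trans a b c hab hbc := dvd_trans hab hbc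

theorem le_def {a b : DvdPNat} : a ≤ b ↔ (a.val : ℕ) ∣ (b.val : ℕ) := Iff.rfl

instance : IsDirected DvdPNat (· ≤ ·) :=
  ⟨fun a b => ⟨mk (a.val * b.val), le_def.mpr ⟨b.val, by simp⟩,
    le_def.mpr ⟨a.val, by simp [mul_comm]⟩⟩⟩

end DvdPNat

open CategoryTheory in
theorem key_lift {G H : Type*} [AddCommGroup G] [AddCommGroup H]
    (hGfin : ∀ n : ℕ, 0 < n → Finite {g : G // n • g = 0})
    (f : G →+ H) (hsurj : Function.Surjective f)
    (hkerdiv : ∀ k ∈ f.ker, ∀ n : ℕ, 0 < n → ∃ k' ∈ f.ker, n • k' = k)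
    (t : ℕ+ → H) (ht : ∀ n m : ℕ+, (m : ℕ) • t (n * m) = t n) (ht1 : t 1 = 0) :
      ∃ s : ℕ+ → G, (∀ n m : ℕ+, (m : ℕ) • s (n * m) = s n) ∧ s 1 = 0 ∧ ∀ n : ℕ+, f (s n) = t n := by
  have htor : ∀ n : ℕ+, (n : ℕ) • t n = 0 := by
    intro n
    have h := ht 1 n
    rwa [one_mul, ht1] at h
  let X : ℕ+ → Type _ := fun n => {g : G // (n : ℕ) • g = 0 ∧ f g = t n}
  have hfin : ∀ n : ℕ+, Finite (X n) := by
    intro n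
    haveI := hGfin (n : ℕ) n.pos
    exact Finite.of_injective (fun x : X n => (⟨x.1, x.2.1⟩ : {g : G // (n:ℕ) • g = 0}))
      (fun a b hab => Subtype.ext (Subtype.mk_eq_mk.mp hab))
  have hne : ∀ n : ℕ+, Nonempty (X n) := by
    intro n
    obtain ⟨g0, hg0⟩ := hsurj (t n)
    have hk : (n : ℕ) • g0 ∈ f.ker := by
      rw [AddMonoidHom.mem_ker, map_nsmul, hg0, htor]
    obtain ⟨k, hkmem, hnk⟩ := hkerdiv _ hk (n : ℕ) n.pos
    refine ⟨⟨g0 - k, ?_, ?_⟩⟩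
    · rw [smul_sub, hnk, sub_self]
    · rw [map_sub, hg0, AddMonoidHom.mem_ker.mp hkmem, sub_zero]
  have key : ∀ (n m : ℕ+), ((n : ℕ) ∣ (m : ℕ)) → ∀ x : X m,
      ((m : ℕ) / (n : ℕ)) • x.1 ∈ {g : G | (n : ℕ) • g = 0 ∧ f g = t n} := by
    intro n m hnm x
    have hd : 0 < (m : ℕ) / (n : ℕ) := Nat.div_pos (Nat.le_of_dvd m.pos hnm) n.pos
    set d : ℕ+ := ⟨(m : ℕ) / (n : ℕ), hd⟩ with hdd
    have hnd : n * d = m := by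
      apply PNat.coe_injective
      change (n : ℕ) * ((m : ℕ) / (n : ℕ)) = m
      exact Nat.mul_div_cancel' hnm
    constructor
    · rw [← mul_smul, Nat.mul_div_cancel' hnm, x.2.1]
    · rw [map_nsmul, x.2.2]
      have := ht n d
      rwa [hnd] at this
  let F : DvdPNatᵒᵖ ⥤ Type _ :=
    { obj := fun j => X j.unop.val
      map := fun {j j'} ψ => TypeCat.ofHom fun x =>
        ⟨(((j.unop.val : ℕ+) : ℕ) / ((j'.unop.val : ℕ+) : ℕ)) • x.1,
          key j'.unop.val j.unop.val (DvdPNat.le_def.mp ψ.unop.le) x⟩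
      map_id := by
        intro j
        ext x
        show (((j.unop.val : ℕ+) : ℕ) / ((j.unop.val : ℕ+) : ℕ)) • x.1 = x.1
        rw [Nat.div_self (j.unop.val : ℕ+).pos, one_smul]
      map_comp := by
        intro j j' j'' ψ φ
        ext x
        show ((j.unop.val : ℕ) / (j''.unop.val : ℕ)) • x.1
          = ((j'.unop.val : ℕ) / (j''.unop.val : ℕ)) •
            (((j.unop.val : ℕ) / (j'.unop.val : ℕ)) • x.1)
        rw [← mul_smul]
        congr 1
        have h1 : ((j'.unop.val : ℕ+) : ℕ) ∣ (j.unop.val : ℕ) := DvdPNat.le_def.mp ψ.unop.le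
        have h2 : ((j''.unop.val : ℕ+) : ℕ) ∣ (j'.unop.val : ℕ) := DvdPNat.le_def.mp φ.unop.le
        rw [Nat.div_mul_div_comm h2 h1, Nat.mul_comm ((j''.unop.val : ℕ+) : ℕ),
          Nat.mul_div_mul_left _ _ (j'.unop.val : ℕ+).pos] }
  haveI : ∀ j : DvdPNatᵒᵖ, Finite (F.obj j) := fun j => hfin j.unop.val
  haveI : ∀ j : DvdPNatᵒᵖ, Nonempty (F.obj j) := fun j => hne j.unop.val
  obtain ⟨u, hu⟩ := nonempty_sections_of_finite_inverse_system F
  refine ⟨fun n => (u (Opposite.op (DvdPNat.mk n))).1, ?_, ?_, ?_⟩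
  · intro n m
    have hle : DvdPNat.mk n ≤ DvdPNat.mk (n * m) :=
      DvdPNat.le_def.mpr (by simp [PNat.mul_coe])
    have h := hu ((homOfLE hle).op)
    have h2 := congrArg Subtype.val h
    show (m : ℕ) • (u (Opposite.op (DvdPNat.mk (n * m)))).1 = (u (Opposite.op (DvdPNat.mk n))).1
    rw [← h2]
    show (m : ℕ) • _ = (((n * m : ℕ+) : ℕ) / (n : ℕ)) • (u (Opposite.op (DvdPNat.mk (n * m)))).1
    congr 1
    rw [PNat.mul_coe, Nat.mul_div_cancel_left _ n.pos]
  · have h0 := (u (Opposite.op (DvdPNat.mk 1))).2.1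
    simpa using h0
  · intro n
    exact (u (Opposite.op (DvdPNat.mk n))).2.2

/-- If `f : G → H` is a surjection of divisible abelian groups with divisible kernel and
`G` has finite `n`-torsion for all `n`, then the induced map `Ĝ → Ĥ` restricts to a
surjection `ker ρ_G → ker ρ_H`. -/
theorem stmt18 {G H : Type*} [AddCommGroup G] [AddCommGroup H]
    (hGdiv : ∀ g : G, ∀ n : ℕ, 0 < n → ∃ g' : G, n • g' = g)
    (hHdiv : ∀ h : H, ∀ n : ℕ, 0 < n → ∃ h' : H, n • h' = h)
    (hGfin : ∀ n : ℕ, 0 < n → Finite {g : G // n • g = 0})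
    (f : G →+ H) (hsurj : Function.Surjective f)
    (hkerdiv : ∀ k ∈ f.ker, ∀ n : ℕ, 0 < n → ∃ k' ∈ f.ker, n • k' = k) :
    ∀ t ∈ Coherent H, t 1 = 0 →
      ∃ s ∈ Coherent G, s 1 = 0 ∧ ∀ n : ℕ+, f (s n) = t n := by
  intro t ht ht1
  obtain ⟨s, hs, hs1, hsf⟩ := key_lift hGfin f hsurj hkerdiv t ht ht1
  exact ⟨s, hs, hs1, hsf⟩
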